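/- If G and H are finite simple graphs such that G admits a proper coloring with ω(I(H)) colors, where I(H) is the isolation graph of H and ω denotes the clique number, then ι(G □ H) ≤ n(G)·ι(H), where n(G) is the order of G. -/

import Mathlib

/-- The closed neighborhood `N[A]` of a set of vertices. -/
def closedNbhd {V : Type*} (G : SimpleGraph V) (A : Set V) : Set V :=
  {v | v ∈ A ∨ ∃ a ∈ A, G.Adj a v}

/-- A set of vertices is independent if it contains no edge. -/
def IndepSet {V : Type*} (G : SimpleGraph V) (S : Set V) : Prop :=
  ∀ u ∈ S, ∀ v ∈ S, ¬ G.Adj u v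

/-- `A` is isolating if the vertices outside `N[A]` form an independent set. -/
def IsIsolating {V : Type*} (G : SimpleGraph V) (A : Set V) : Prop :=
  IndepSet G (closedNbhd G A)ᶜ

/-- The isolation number `ι(G)`. -/
noncomputable def isolationNum {V : Type*} (G : SimpleGraph V) : ℕ :=
  sInf {n | ∃ A : Set V, IsIsolating G A ∧ A.ncard = n}

/-- `D` is a dominating set if `N[D] = V(G)`. -/
def IsDominating {V : Type*} (G : SimpleGraph V) (D : Set V) : Prop :=
  closedNbhd G D = Set.univ

/-- The domination number `γ(G)`. -/
noncomputable def dominationNum {V : Type*} (G : SimpleGraph V) : ℕ :=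
  sInf {n | ∃ D : Set V, IsDominating G D ∧ D.ncard = n}
/-- The set of vertices outside `N[A]`. -/
def leftoverSet {V : Type*} (G : SimpleGraph V) (A : Set V) : Set V :=
  (closedNbhd G A)ᶜ

/-- The vertices of the isolation graph: the `ι(G)`-sets. -/
def IotaSets (V : Type*) (G : SimpleGraph V) : Type _ :=
  {A : Set V // IsIsolating G A ∧ A.ncard = isolationNum G}

/-- The isolation graph `I(G)`: vertices are the `ι(G)`-sets, two distinct such sets
`A`, `B` being adjacent whenever `L_A ∩ L_B = ∅`. -/
def isolationGraph {V : Type*} (G : SimpleGraph V) : SimpleGraph (IotaSets V G) where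
  Adj A B := A ≠ B ∧ leftoverSet G A.1 ∩ leftoverSet G B.1 = ∅
  symm := ⟨fun A B h => ⟨h.1.symm, by rw [Set.inter_comm]; exact h.2⟩⟩
  loopless := ⟨fun A h => h.1 rfl⟩

/-- The clique number `ω(G)`. -/
noncomputable def cliqueNumber {W : Type*} (G : SimpleGraph W) : ℕ :=
  sSup {n | ∃ S : Set W, (∀ u ∈ S, ∀ v ∈ S, u ≠ v → G.Adj u v) ∧ S.ncard = n}

/-- `α_k(G)`: the maximum number of vertices inducing a `k`-colorable subgraph of `G`. -/
noncomputable def alphaK {V : Type*} (G : SimpleGraph V) (k : ℕ) : ℕ :=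
  sSup {n | ∃ S : Set V,
    (∃ c : V → Fin k, ∀ u ∈ S, ∀ v ∈ S, G.Adj u v → c u ≠ c v) ∧ S.ncard = n}

/-- If `G` is `ω(I(H))`-colorable, then `ι(G □ H) ≤ n(G) · ι(H)`. -/
theorem isolation_boxProd_le_of_colorable
    {V W : Type*} [Fintype V] [Fintype W] (G : SimpleGraph V) (H : SimpleGraph W)
    (hcol : G.Colorable (cliqueNumber (isolationGraph H))) :
    isolationNum (G.boxProd H) ≤ Fintype.card V * isolationNum H := by

  classical
  set k := cliqueNumber (isolationGraph H) with hk
  -- `isolationNum H` is achieved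
  have hne : {n | ∃ A : Set W, IsIsolating H A ∧ A.ncard = n}.Nonempty := by
    refine ⟨(Set.univ : Set W).ncard, Set.univ, ?_, rfl⟩
    intro u hu v hv hadj
    exact hu (Or.inl trivial)
  have hfinW : Finite (IotaSets W H) := by
    unfold IotaSets; infer_instance
  -- a clique of size `k` in the isolation graph
  have hTne : ({n | ∃ S : Set (IotaSets W H),
      (∀ u ∈ S, ∀ v ∈ S, u ≠ v → (isolationGraph H).Adj u v) ∧ S.ncard = n}).Nonempty := by
    exact ⟨0, ∅, by simp, by simp⟩
  have hTbdd : BddAbove {n | ∃ S : Set (IotaSets W H),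
      (∀ u ∈ S, ∀ v ∈ S, u ≠ v → (isolationGraph H).Adj u v) ∧ S.ncard = n} := by
    refine ⟨Nat.card (IotaSets W H), ?_⟩
    rintro n ⟨S, -, rfl⟩
    rw [← Set.ncard_univ]
    exact Set.ncard_le_ncard (Set.subset_univ S) Set.finite_univ
  have hkmem := Nat.sSup_mem hTne hTbdd
  obtain ⟨S, hSclique, hScard⟩ := hkmem
  have hSfin : S.Finite := Set.toFinite S
  have hcard : hSfin.toFinset.card = k :=
    (Set.ncard_eq_toFinset_card S hSfin).symm.trans hScard
  let e := Finset.equivFinOfCardEq hcard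
  let f : Fin k → IotaSets W H := fun i => (e.symm i).1
  have hfmem : ∀ i, f i ∈ S := fun i => hSfin.mem_toFinset.mp (e.symm i).2
  have hfinj : Function.Injective f := by
    intro i j h
    have : e.symm i = e.symm j := Subtype.ext h
    exact e.symm.injective this
  obtain ⟨c⟩ := hcol
  let B : V → Set W := fun g => (f (c g)).1
  have hB_iso : ∀ g, IsIsolating H (B g) := fun g => (f (c g)).2.1
  have hB_card : ∀ g, (B g).ncard = isolationNum H := fun g => (f (c g)).2.2
  have hdisj : ∀ g g', G.Adj g g' →
      leftoverSet H (B g) ∩ leftoverSet H (B g') = ∅ := by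
    intro g g' hadj
    have hc : c g ≠ c g' := c.valid hadj
    have hf : f (c g) ≠ f (c g') := fun h => hc (hfinj h)
    have hadj' : f (c g) ≠ f (c g') ∧ leftoverSet H (B g) ∩ leftoverSet H (B g') = ∅ :=
      hSclique _ (hfmem _) _ (hfmem _) hf
    exact hadj'.2
  set A : Set (V × W) := {p : V × W | p.2 ∈ B p.1} with hA
  have key : ∀ g h, (g, h) ∉ closedNbhd (G.boxProd H) A → h ∈ leftoverSet H (B g) := by
    intro g h hnot hc
    rcases hc with hb | ⟨a, ha, hadj⟩
    · exact hnot (Or.inl hb)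
    · exact hnot (Or.inr ⟨(g, a), ha, Or.inr ⟨hadj, rfl⟩⟩)
  have hiso : IsIsolating (G.boxProd H) A := by
    rintro ⟨g, h⟩ hx ⟨g', h'⟩ hy hadj
    rcases hadj with ⟨hG, (heq : h = h')⟩ | ⟨hH, (heq : g = g')⟩
    · subst heq
      have h1 := key g h hx
      have h2 := key g' h hy
      have := hdisj g g' hG
      have : h ∈ leftoverSet H (B g) ∩ leftoverSet H (B g') := ⟨h1, h2⟩
      rw [hdisj g g' hG] at this
      exact this
    · subst heq
      exact hB_iso g h (key g h hx) h' (key g h' hy) hH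
  -- cardinality bound
  set F : Finset (V × W) :=
    Finset.univ.biUnion (fun g : V => {g} ×ˢ (Set.toFinite (B g)).toFinset) with hF
  have hAF : A = ↑F := by
    ext ⟨g, h⟩
    simp only [hF, hA, Finset.coe_biUnion, Finset.coe_univ, Set.mem_iUnion,
      Finset.coe_product, Finset.coe_singleton, Set.Finite.coe_toFinset,
      Set.mem_prod, Set.mem_singleton_iff, Set.mem_setOf_eq]
    constructor
    · intro hm; exact ⟨g, trivial, rfl, hm⟩
    · rintro ⟨g', -, rfl, hm⟩; exact hm
  have hcardA : A.ncard ≤ Fintype.card V * isolationNum H := by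
    rw [hAF, Set.ncard_coe_finset]
    calc F.card ≤ ∑ g : V, ({g} ×ˢ (Set.toFinite (B g)).toFinset).card :=
          Finset.card_biUnion_le
      _ = ∑ g : V, isolationNum H := by
          refine Finset.sum_congr rfl fun g _ => ?_
          rw [Finset.card_product, Finset.card_singleton, one_mul,
            ← Set.ncard_eq_toFinset_card (B g) (Set.toFinite (B g))]
          exact hB_card g
      _ = Fintype.card V * isolationNum H := by
          rw [Finset.sum_const, Finset.card_univ, smul_eq_mul]
  exact le_trans (Nat.sInf_le ⟨A, hiso, rfl⟩) hcardA
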